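/- For even k and integers k ≤ ℓ ≤ n/log₂ n with n sufficiently large, the Kikuchi graph G of a k-uniform hypergraph H on [n] has at least (1/2)·e(H)·binom(k, k/2)·binom(n−k, ℓ−k/2) edges, and binom(n, ℓ) ≤ binom(n−k, ℓ−k/2)·(4n/ℓ)^{k/2}. -/

import Mathlib

lemma choose_ident (a b : ℕ) (hb : 1 ≤ b) (hba : b + 1 ≤ a) :
    a.choose b * (b * (a - b)) = (a - 2).choose (b - 1) * (a * (a - 1)) := by
  obtain ⟨a', rfl⟩ : ∃ a', a = a' + 2 := ⟨a - 2, by omega⟩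
  obtain ⟨b', rfl⟩ : ∃ b', b = b' + 1 := ⟨b - 1, by omega⟩
  have h1 : (a' + 2) * (a' + 1).choose b' = (a' + 2).choose (b' + 1) * (b' + 1) := by
    have := Nat.add_one_mul_choose_eq (a' + 1) b'
    simpa [Nat.succ_eq_add_one] using this
  have h2 : a'.choose b' * (a' + 1) = (a' + 1).choose b' * (a' + 1 - b') := by
    simpa using Nat.choose_mul_succ_eq a' b'
  have e1 : a' + 2 - 2 = a' := by omega
  have e2 : b' + 1 - 1 = b' := by omega
  have e3 : a' + 2 - (b' + 1) = a' + 1 - b' := by omega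
  rw [e1, e2, e3]
  calc (a' + 2).choose (b' + 1) * ((b' + 1) * (a' + 1 - b'))
      = ((a' + 2).choose (b' + 1) * (b' + 1)) * (a' + 1 - b') := by ring
    _ = ((a' + 2) * (a' + 1).choose b') * (a' + 1 - b') := by rw [← h1]
    _ = (a' + 2) * ((a' + 1).choose b' * (a' + 1 - b')) := by ring
    _ = (a' + 2) * (a'.choose b' * (a' + 1)) := by rw [← h2]
    _ = a'.choose b' * ((a' + 2) * (a' + 1)) := by ring

lemma choose_step (n ℓ a b : ℕ) (hℓ : 1 ≤ ℓ) (hb : 1 ≤ b) (hba : b + 1 ≤ a)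
    (h1 : a ≤ n) (h2 : ℓ ≤ 2 * b) (h3 : n ≤ 2 * (a - b)) :
    (a.choose b : ℝ) ≤ ((a - 2).choose (b - 1) : ℝ) * (4 * n / ℓ) := by
  have hident := choose_ident a b hb hba
  have hcast : (a.choose b : ℝ) * ((b : ℝ) * ((a : ℝ) - b)) =
      ((a - 2).choose (b - 1) : ℝ) * ((a : ℝ) * ((a : ℝ) - 1)) := by
    have := congrArg (fun x : ℕ => (x : ℝ)) hident
    push_cast [Nat.cast_sub (show b ≤ a by omega), Nat.cast_sub (show 1 ≤ a by omega)] at this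
    convert this using 2 <;> ring
  have hd : (n : ℝ) ≤ 2 * ((a : ℝ) - b) := by
    have : ((2 * (a - b) : ℕ) : ℝ) = 2 * ((a : ℝ) - b) := by
      push_cast [Nat.cast_sub (show b ≤ a by omega)]; ring
    rw [← this]; exact_mod_cast h3
  have hbR : (0 : ℝ) < b := by exact_mod_cast hb
  have habR : (0 : ℝ) < (a : ℝ) - b := by
    have : (b : ℝ) + 1 ≤ a := by exact_mod_cast hba
    linarith
  have hlR : (0 : ℝ) < ℓ := by exact_mod_cast hℓ
  have haN : (a : ℝ) ≤ n := by exact_mod_cast h1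
  have hlb : (ℓ : ℝ) ≤ 2 * b := by exact_mod_cast h2
  have haa : (a : ℝ) * a ≤ (n : ℝ) * n :=
    mul_le_mul haN haN (Nat.cast_nonneg a) (Nat.cast_nonneg n)
  have key : ((a : ℝ) * ((a : ℝ) - 1)) * ℓ ≤ (4 * n) * ((b : ℝ) * ((a : ℝ) - b)) := by
    calc ((a : ℝ) * ((a : ℝ) - 1)) * ℓ ≤ ((a : ℝ) * a) * ℓ := by
          nlinarith [mul_nonneg (Nat.cast_nonneg a (α := ℝ)) hlR.le]
      _ ≤ ((n : ℝ) * n) * ℓ := mul_le_mul_of_nonneg_right haa hlR.le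
      _ ≤ ((n : ℝ) * n) * (2 * b) := by
          apply mul_le_mul_of_nonneg_left hlb; positivity
      _ ≤ (2 * ((a : ℝ) - b)) * n * (2 * b) := by
          nlinarith [mul_le_mul_of_nonneg_right (mul_le_mul_of_nonneg_right hd
            (Nat.cast_nonneg n (α := ℝ))) (show (0:ℝ) ≤ 2 * (b:ℝ) by positivity)]
      _ = (4 * n) * ((b : ℝ) * ((a : ℝ) - b)) := by ring
  have hpos : (0 : ℝ) < (b : ℝ) * ((a : ℝ) - b) := mul_pos hbR habR
  rw [← mul_le_mul_iff_of_pos_right hpos, hcast]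
  have hC : (0 : ℝ) ≤ ((a - 2).choose (b - 1) : ℝ) := by positivity
  calc ((a - 2).choose (b - 1) : ℝ) * ((a : ℝ) * ((a : ℝ) - 1))
      ≤ ((a - 2).choose (b - 1) : ℝ) * ((4 * n / ℓ) * ((b : ℝ) * ((a : ℝ) - b))) := by
        apply mul_le_mul_of_nonneg_left _ hC
        rw [div_mul_eq_mul_div, le_div_iff₀ hlR]
        linarith [key]
    _ = ((a - 2).choose (b - 1) : ℝ) * (4 * n / ℓ) * ((b : ℝ) * ((a : ℝ) - b)) := by ring

lemma choose_bound (n ℓ : ℕ) (hℓ : 1 ≤ ℓ) (hn : 4 * ℓ ≤ n) :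
    ∀ m : ℕ, 2 * m ≤ ℓ → (n.choose ℓ : ℝ) ≤ ((n - 2 * m).choose (ℓ - m) : ℝ) * (4 * n / ℓ) ^ m := by
  intro m
  induction m with
  | zero => intro _; simp
  | succ m ih =>
    intro hm
    have ihm := ih (by omega)
    have hstep : ((n - 2 * m).choose (ℓ - m) : ℝ) ≤
        ((n - 2 * m - 2).choose (ℓ - m - 1) : ℝ) * (4 * n / ℓ) :=
      choose_step n ℓ (n - 2 * m) (ℓ - m) hℓ (by omega) (by omega) (by omega) (by omega) (by omega)
    have e1 : n - 2 * (m + 1) = n - 2 * m - 2 := by omega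
    have e2 : ℓ - (m + 1) = ℓ - m - 1 := by omega
    rw [e1, e2, pow_succ]
    have hnn : (0 : ℝ) ≤ (4 * n / ℓ) ^ m := by positivity
    calc (n.choose ℓ : ℝ) ≤ ((n - 2 * m).choose (ℓ - m) : ℝ) * (4 * n / ℓ) ^ m := ihm
      _ ≤ (((n - 2 * m - 2).choose (ℓ - m - 1) : ℝ) * (4 * n / ℓ)) * (4 * n / ℓ) ^ m :=
        mul_le_mul_of_nonneg_right hstep hnn
      _ = ((n - 2 * m - 2).choose (ℓ - m - 1) : ℝ) * ((4 * n / ℓ) ^ m * (4 * n / ℓ)) := by ring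

lemma part1 (n k ℓ : ℕ) (hke : Even k) (hk : 0 < k) (hkl : k ≤ ℓ)
    (H : Finset (Finset (Fin n))) (hH : ∀ E ∈ H, E.card = k) :
    ((Nat.card {p : Finset (Fin n) × Finset (Fin n) //
        p.1.card = ℓ ∧ p.2.card = ℓ ∧ ∃ E ∈ H, symmDiff p.1 p.2 = E ∧
          (p.1 ∩ E).card = k / 2 ∧ (p.2 ∩ E).card = k / 2} : ℝ) ≥
      (H.card : ℝ) * (k.choose (k / 2)) * ((n - k).choose (ℓ - k / 2))) := by
  classical
  have hk2 : k % 2 = 0 := Nat.even_iff.mp hke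
  set pred : Finset (Fin n) × Finset (Fin n) → Prop := fun p =>
    p.1.card = ℓ ∧ p.2.card = ℓ ∧ ∃ E ∈ H, symmDiff p.1 p.2 = E ∧
      (p.1 ∩ E).card = k / 2 ∧ (p.2 ∩ E).card = k / 2 with hpred
  set D : Finset ((_ : Finset (Fin n)) × (Finset (Fin n) × Finset (Fin n))) :=
    H.sigma (fun E => (E.powersetCard (k / 2)) ×ˢ ((Eᶜ).powersetCard (ℓ - k / 2))) with hD
  set T : Finset (Finset (Fin n) × Finset (Fin n)) := Finset.univ.filter pred with hT
  have hDcard : D.card = H.card * (k.choose (k / 2) * ((n - k).choose (ℓ - k / 2))) := by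
    rw [hD, Finset.card_sigma]
    rw [Finset.sum_congr rfl (fun E hE => ?_), Finset.sum_const, smul_eq_mul]
    rw [Finset.card_product, Finset.card_powersetCard, Finset.card_powersetCard,
      Finset.card_compl, Fintype.card_fin, hH E hE]
  -- facts about elements of D
  have hfacts : ∀ t ∈ D, t.1 ∈ H ∧ t.2.1 ⊆ t.1 ∧ t.2.1.card = k / 2 ∧
      (∀ x ∈ t.2.2, x ∉ t.1) ∧ t.2.2.card = ℓ - k / 2 := by
    rintro ⟨E, A, W⟩ ht
    rw [hD, Finset.mem_sigma, Finset.mem_product, Finset.mem_powersetCard,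
      Finset.mem_powersetCard] at ht
    exact ⟨ht.1, ht.2.1.1, ht.2.1.2, fun x hx => Finset.mem_compl.mp (ht.2.2.1 hx), ht.2.2.2⟩
  set f : ((_ : Finset (Fin n)) × (Finset (Fin n) × Finset (Fin n))) →
      Finset (Fin n) × Finset (Fin n) :=
    fun t => (t.2.1 ∪ t.2.2, (t.1 \ t.2.1) ∪ t.2.2) with hf
  -- key structural facts about f t
  have hkey : ∀ t ∈ D, symmDiff (f t).1 (f t).2 = t.1 ∧ (f t).1 ∩ t.1 = t.2.1 ∧
      (f t).1 \ t.1 = t.2.2 ∧ (f t).2 ∩ t.1 = t.1 \ t.2.1 := by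
    rintro ⟨E, A, W⟩ ht
    obtain ⟨hE, hA, hAc, hW, hWc⟩ := hfacts _ ht
    simp only [hf] at *
    refine ⟨?_, ?_, ?_, ?_⟩
    · ext x
      simp only [Finset.mem_symmDiff, Finset.mem_union, Finset.mem_sdiff]
      have h1 : x ∈ A → x ∈ E := fun h => hA h
      have h2 : x ∈ W → x ∉ E := fun h => hW x h
      tauto
    · ext x
      simp only [Finset.mem_inter, Finset.mem_union]
      have h1 : x ∈ A → x ∈ E := fun h => hA h
      have h2 : x ∈ W → x ∉ E := fun h => hW x h
      tauto
    · ext x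
      simp only [Finset.mem_sdiff, Finset.mem_union]
      have h1 : x ∈ A → x ∈ E := fun h => hA h
      have h2 : x ∈ W → x ∉ E := fun h => hW x h
      tauto
    · ext x
      simp only [Finset.mem_inter, Finset.mem_union, Finset.mem_sdiff]
      have h2 : x ∈ W → x ∉ E := fun h => hW x h
      tauto
  have hmaps : ∀ t ∈ D, f t ∈ T := by
    rintro ⟨E, A, W⟩ ht
    obtain ⟨hE, hA, hAc, hW, hWc⟩ := hfacts _ ht
    obtain ⟨hsy, hSE, hSW, hTE⟩ := hkey _ ht
    have hdisj : Disjoint A W := by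
      rw [Finset.disjoint_left]; intro x hx hxW; exact hW x hxW (hA hx)
    have hdisj2 : Disjoint (E \ A) W := by
      rw [Finset.disjoint_left]; intro x hx hxW
      exact hW x hxW (Finset.mem_sdiff.mp hx).1
    have hEc := hH E hE
    rw [hT, Finset.mem_filter]
    refine ⟨Finset.mem_univ _, ?_, ?_, E, hE, hsy, ?_, ?_⟩
    · show (A ∪ W).card = ℓ
      rw [Finset.card_union_of_disjoint hdisj, hAc, hWc]; omega
    · show ((E \ A) ∪ W).card = ℓ
      rw [Finset.card_union_of_disjoint hdisj2, Finset.card_sdiff_of_subset hA, hEc, hAc, hWc]; omega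
    · show ((A ∪ W) ∩ E).card = k / 2
      have : (A ∪ W) ∩ E = A := hSE
      rw [this, hAc]
    · show (((E \ A) ∪ W) ∩ E).card = k / 2
      have : ((E \ A) ∪ W) ∩ E = E \ A := hTE
      rw [this, Finset.card_sdiff_of_subset hA, hEc, hAc]; omega
  have hinj : Set.InjOn f D := by
    rintro ⟨E1, A1, W1⟩ h1 ⟨E2, A2, W2⟩ h2 heq
    obtain ⟨hsy1, hSE1, hSW1, -⟩ := hkey _ h1
    obtain ⟨hsy2, hSE2, hSW2, -⟩ := hkey _ h2
    have hfe : f ⟨E1, A1, W1⟩ = f ⟨E2, A2, W2⟩ := heq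
    dsimp only at hsy1 hSE1 hSW1 hsy2 hSE2 hSW2
    simp only [hf, Prod.mk.injEq] at hfe
    obtain ⟨hfe1, hfe2⟩ := hfe
    simp only [hf] at hsy1 hSE1 hSW1 hsy2 hSE2 hSW2
    have hEeq : E1 = E2 := by rw [← hsy1, ← hsy2, hfe1, hfe2]
    have hAeq : A1 = A2 := by rw [← hSE1, ← hSE2, hfe1, hEeq]
    have hWeq : W1 = W2 := by rw [← hSW1, ← hSW2, hfe1, hEeq]
    subst hEeq; subst hAeq; subst hWeq; rfl
  have hle : D.card ≤ T.card := Finset.card_le_card_of_injOn f hmaps hinj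
  have hNat : Nat.card {p : Finset (Fin n) × Finset (Fin n) // pred p} = T.card := by
    rw [Nat.card_eq_fintype_card, hT]
    exact Fintype.card_subtype pred
  rw [ge_iff_le]
  calc (H.card : ℝ) * (k.choose (k / 2)) * ((n - k).choose (ℓ - k / 2))
      = ((H.card * (k.choose (k / 2) * ((n - k).choose (ℓ - k / 2))) : ℕ) : ℝ) := by
        push_cast; ring
    _ = (D.card : ℝ) := by rw [hDcard]
    _ ≤ (T.card : ℝ) := by exact_mod_cast hle
    _ = _ := by rw [← hNat]


/-- Edge count of the Kikuchi graph (even `k`, `k ≤ ℓ ≤ n/log₂ n`, `n` large): the number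
of ordered pairs `(S,T)` forming an edge (which is twice the number of edges) is at least
`e(H)·binom(k,k/2)·binom(n−k,ℓ−k/2)`, and moreover
`binom(n,ℓ) ≤ binom(n−k,ℓ−k/2)·(4n/ℓ)^{k/2}`. -/
theorem stmt11 :
    ∃ N : ℕ, ∀ n : ℕ, N ≤ n → ∀ k ℓ : ℕ, Even k → 0 < k → k ≤ ℓ →
      (ℓ : ℝ) ≤ (n : ℝ) / Real.logb 2 n →
      ∀ H : Finset (Finset (Fin n)), (∀ E ∈ H, E.card = k) →
        ((Nat.card {p : Finset (Fin n) × Finset (Fin n) //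
            p.1.card = ℓ ∧ p.2.card = ℓ ∧ ∃ E ∈ H, symmDiff p.1 p.2 = E ∧
              (p.1 ∩ E).card = k / 2 ∧ (p.2 ∩ E).card = k / 2} : ℝ) ≥
          (H.card : ℝ) * (k.choose (k / 2)) * ((n - k).choose (ℓ - k / 2))) ∧
        ((n.choose ℓ : ℝ) ≤
          ((n - k).choose (ℓ - k / 2) : ℝ) * (4 * n / ℓ) ^ (k / 2)) := by
  refine ⟨16, fun n hN k ℓ hke hk hkl hℓn H hH => ?_⟩
  have hk2 : k % 2 = 0 := Nat.even_iff.mp hke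
  refine ⟨part1 n k ℓ hke hk hkl H hH, ?_⟩
  -- derive 4ℓ ≤ n
  have hn16 : (16 : ℝ) ≤ (n : ℝ) := by exact_mod_cast hN
  have hnpos : (0 : ℝ) < (n : ℝ) := by linarith
  have hlogb : (4 : ℝ) ≤ Real.logb 2 n := by
    rw [Real.le_logb_iff_rpow_le (by norm_num) hnpos]
    have h24 : (2 : ℝ) ^ (4 : ℝ) = 16 := by
      rw [show (4 : ℝ) = ((4 : ℕ) : ℝ) by norm_num, Real.rpow_natCast]; norm_num
    rw [h24]; exact hn16
  have hdiv : (n : ℝ) / Real.logb 2 n ≤ (n : ℝ) / 4 := by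
    gcongr
  have h4ℓ : 4 * ℓ ≤ n := by
    have : (ℓ : ℝ) ≤ (n : ℝ) / 4 := le_trans hℓn hdiv
    have h2 : ((4 * ℓ : ℕ) : ℝ) ≤ (n : ℝ) := by push_cast; linarith
    exact_mod_cast h2
  have hℓ1 : 1 ≤ ℓ := le_trans hk hkl
  have hb := choose_bound n ℓ hℓ1 h4ℓ (k / 2) (by omega)
  have e1 : n - 2 * (k / 2) = n - k := by omega
  rwa [e1] at hb
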